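/- Let r > 0 and ρ(T) = r / log T. Let T(n) → ∞, u_n → ∞ be such that T(n)·μ(u_n) → θ ∈ (0,∞). For z ∈ ℝ define u_n^{(z)} = (u_n − ρ(T(n))^{1/2} z)/(1 − ρ(T(n)))^{1/2} and v_n^{(z)} = (u_n + ρ(T(n))^{1/2} z)/(1 − ρ(T(n)))^{1/2}. Then for every z ∈ ℝ, lim_{n→∞} T(n)·μ(u_n^{(z)}) = θ·e^{−r+√(2r)z} and lim_{n→∞} T(n)·μ(v_n^{(z)}) = θ·e^{−r−√(2r)z}. -/

import Mathlib

open MeasureTheory ProbabilityTheory Filter Set Asymptotics Topology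

noncomputable section

/-- The standard normal survival function `Ψ(u) = P(W > u)`. -/
def Psi (u : ℝ) : ℝ := ((gaussianReal 0 1) (Set.Ioi u)).toReal

/-- The standard normal distribution function `Φ`. -/
def Phi (u : ℝ) : ℝ := ((gaussianReal 0 1) (Set.Iic u)).toReal

/-- The standard normal density `φ`. -/
def stdPdf (z : ℝ) : ℝ := Real.exp (-z ^ 2 / 2) / Real.sqrt (2 * Real.pi)

/-- A family of random variables indexed by times in `S` is a centered Gaussian family
with covariance kernel `K` if every finite linear combination of its values is a centered
Gaussian random variable with the corresponding variance. -/
def IsGaussianFamilyOn {Ω : Type*} [MeasurableSpace Ω] (P : Measure Ω)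
    (X : ℝ → Ω → ℝ) (K : ℝ → ℝ → ℝ) (S : Set ℝ) : Prop :=
  ∀ (m : ℕ) (t : Fin m → ℝ), (∀ i, t i ∈ S) → ∀ c : Fin m → ℝ,
    Measure.map (fun ω => ∑ i, c i * X (t i) ω) P
      = gaussianReal 0 (∑ i, ∑ j, c i * c j * K (t i) (t j)).toNNReal

/-- A centered Gaussian family indexed by all of `ℝ`. -/
def IsGaussianFamily {Ω : Type*} [MeasurableSpace Ω] (P : Measure Ω)
    (X : ℝ → Ω → ℝ) (K : ℝ → ℝ → ℝ) : Prop :=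
  IsGaussianFamilyOn P X K Set.univ

/-- Covariance kernel of a fractional Brownian motion with `E B(t)² = |t|^α`
(a centered Gaussian process with stationary increments and `B(0) = 0`). -/
def fbmCov (α : ℝ) (s t : ℝ) : ℝ := (|s| ^ α + |t| ^ α - |s - t| ^ α) / 2

/-- `H_α(λ) = E[exp(max_{t∈[0,λ]}(√2 B_{α/2}(t) − t^α))]` for a given fBm `B`. -/
def pickandsFun {Ω : Type*} [MeasurableSpace Ω] (P : Measure Ω) (α : ℝ)
    (B : ℝ → Ω → ℝ) (lam : ℝ) : ℝ :=
  ∫ ω, Real.exp (⨆ t : Set.Icc (0:ℝ) lam, (Real.sqrt 2 * B (t : ℝ) ω - (t : ℝ) ^ α)) ∂P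

/-- `H` is the Pickands constant `H_α = lim_{λ→∞} H_α(λ)/λ`. -/
def IsPickandsConstant (α H : ℝ) : Prop :=
  ∃ (Ω : Type) (_ : MeasurableSpace Ω) (P : Measure Ω) (B : ℝ → Ω → ℝ),
    IsProbabilityMeasure P ∧ IsGaussianFamily P B (fbmCov α) ∧
    Tendsto (fun lam => pickandsFun P α B lam / lam) atTop (𝓝 H)

/-- `μ(u) = H_α u^{2/α} Ψ(u)`. -/
def muF (α H u : ℝ) : ℝ := H * u ^ (2 / α) * Psi u

/-- `a_T = √(2 log T)`. -/
def aT (T : ℝ) : ℝ := Real.sqrt (2 * Real.log T)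

/-- `b_T = √(2 log T) + log(H_α (2π)^{-1/2} (2 log T)^{-1/2+1/α}) / √(2 log T)`. -/
def bT (α H T : ℝ) : ℝ :=
  Real.sqrt (2 * Real.log T) +
    Real.log (H * (2 * Real.pi) ^ (-(1:ℝ) / 2) * (2 * Real.log T) ^ (-(1:ℝ) / 2 + 1 / α)) /
      Real.sqrt (2 * Real.log T)

/-- `Λ_r(x) = E[(Λ(x+r))^{e^{√(2r)W} + e^{-√(2r)W}}]`, `W` standard normal,
`Λ(x) = exp(-e^{-x})`. -/
def LambdaR (r x : ℝ) : ℝ :=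
  ∫ z : ℝ, (Real.exp (-Real.exp (-(x + r)))) ^
      (Real.exp (Real.sqrt (2 * r) * z) + Real.exp (-(Real.sqrt (2 * r) * z))) * stdPdf z

/-- Condition (A1): `r_n(t) = 1 − c_n|t|^α + ε_n(t)|t|^α` with `c_n → 1` and
`ε_n(t) → 0` as `t → 0` uniformly in `n`. -/
def CondA1 (R : ℕ → ℝ → ℝ) (α : ℝ) : Prop :=
  ∃ (c : ℕ → ℝ) (e : ℕ → ℝ → ℝ),
    (∀ n t, R n t = 1 - c n * |t| ^ α + e n t * |t| ^ α) ∧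
    Tendsto c atTop (𝓝 1) ∧
    ∀ δ > 0, ∃ η > 0, ∀ n, ∀ t : ℝ, t ≠ 0 → |t| < η → |e n t| < δ

/-- Condition (A2): for any `ε > 0` there is `γ ∈ (0,1)` with
`sup{|r_n(t)| : |t| ≥ ε, n ∈ ℕ} < γ`. -/
def CondA2 (R : ℕ → ℝ → ℝ) : Prop :=
  ∀ ε > 0, ∃ γ, 0 < γ ∧ γ < 1 ∧ ∀ n, ∀ t : ℝ, ε ≤ |t| → |R n t| < γ

/-- Condition (A3): `r_n(t) log t → 0` as `t → ∞`, uniformly in `n`. -/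
def CondA3 (R : ℕ → ℝ → ℝ) : Prop :=
  ∀ δ > 0, ∃ M : ℝ, ∀ n, ∀ t ≥ M, |R n t * Real.log t| < δ

/-- Condition (B1): `r_n(t) log t → r ∈ (0,∞)` as `t → ∞`, uniformly in `n`. -/
def CondB1 (R : ℕ → ℝ → ℝ) (r : ℝ) : Prop :=
  ∀ δ > 0, ∃ M : ℝ, ∀ n, ∀ t ≥ M, |R n t * Real.log t - r| < δ

/-- Condition (B2): `r_n(t) log t → ∞` as `t → ∞`, uniformly in `n`. -/
def CondB2 (R : ℕ → ℝ → ℝ) : Prop :=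
  ∀ M : ℝ, ∃ t₀ : ℝ, ∀ n, ∀ t ≥ t₀, M < R n t * Real.log t

/-- The union `∪_j I_j`, where each unit interval `[j-1, j]`, `j = 1, …, ⌊T⌋`, of `[0,T]`
is split into `I_j^ε = [j-1, j-1+ε]` followed by `I_j = [j-1+ε, j]`. -/
def unionIj (ε T : ℝ) : Set ℝ :=
  ⋃ j ∈ Finset.Icc 1 ⌊T⌋₊, Set.Icc ((j : ℝ) - 1 + ε) (j : ℝ)

/-- The event `{sup_{t∈I} |X(t)| ≤ u}`. -/
def supEventAbs {Ω : Type*} (Xn : ℝ → Ω → ℝ) (I : Set ℝ) (un : ℝ) : Set Ω :=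
  {ω | (⨆ t : I, |Xn (t : ℝ) ω|) ≤ un}

/-- The event `{sup_{t∈I} X(t) ≤ u}`. -/
def supEvent {Ω : Type*} (Xn : ℝ → Ω → ℝ) (I : Set ℝ) (un : ℝ) : Set Ω :=
  {ω | (⨆ t : I, Xn (t : ℝ) ω) ≤ un}

/-- The event `{max_{jq ∈ I} |X(jq)| ≤ u}` over the grid of spacing `q`. -/
def gridEventAbs {Ω : Type*} (Xn : ℝ → Ω → ℝ) (q : ℝ) (I : Set ℝ) (un : ℝ) : Set Ω :=
  {ω | ∀ j : ℤ, (j : ℝ) * q ∈ I → |Xn ((j : ℝ) * q) ω| ≤ un}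

/-- The event `{max_{jq ∈ I} X(jq) ≤ u}` over the grid of spacing `q`. -/
def gridEvent {Ω : Type*} (Xn : ℝ → Ω → ℝ) (q : ℝ) (I : Set ℝ) (un : ℝ) : Set Ω :=
  {ω | ∀ j : ℤ, (j : ℝ) * q ∈ I → Xn ((j : ℝ) * q) ω ≤ un}

/-- The event `{-v ≤ inf_{s∈I} X(s), sup_{s∈I} X(s) ≤ u}`. -/
def bandEvent {Ω : Type*} (Xn : ℝ → Ω → ℝ) (I : Set ℝ) (vn un : ℝ) : Set Ω :=
  {ω | -vn ≤ (⨅ s : I, Xn (s : ℝ) ω) ∧ (⨆ s : I, Xn (s : ℝ) ω) ≤ un}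

/-- The event `{-v ≤ min_{kq∈I} X(kq), max_{kq∈I} X(kq) ≤ u}` over the grid of spacing `q`. -/
def gridBandEvent {Ω : Type*} (Xn : ℝ → Ω → ℝ) (q : ℝ) (I : Set ℝ) (vn un : ℝ) : Set Ω :=
  {ω | ∀ k : ℤ, (k : ℝ) * q ∈ I → (-vn ≤ Xn ((k : ℝ) * q) ω ∧ Xn ((k : ℝ) * q) ω ≤ un)}

lemma stdPdf_eq (x : ℝ) : stdPdf x = gaussianPDFReal 0 1 x := by
  simp [stdPdf, gaussianPDFReal, div_eq_inv_mul]

lemma stdPdf_pos (x : ℝ) : 0 < stdPdf x := by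
  rw [stdPdf_eq]; exact gaussianPDFReal_pos 0 1 x one_ne_zero

lemma psi_eq_integral (u : ℝ) : Psi u = ∫ x in Ioi u, stdPdf x := by
  rw [Psi, gaussianReal_apply_eq_integral 0 one_ne_zero, ENNReal.toReal_ofReal]
  · simp_rw [stdPdf_eq]
  · exact setIntegral_nonneg measurableSet_Ioi fun x _ => gaussianPDFReal_nonneg 0 1 x

lemma stdPdf_integrableOn (s : Set ℝ) : IntegrableOn stdPdf s := by
  have : stdPdf = gaussianPDFReal 0 1 := funext stdPdf_eq
  rw [this]
  exact (integrable_gaussianPDFReal 0 1).integrableOn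

lemma psi_pos (u : ℝ) : 0 < Psi u := by
  rw [psi_eq_integral]
  refine (setIntegral_pos_iff_support_of_nonneg_ae ?_ ?_).2 ?_
  · exact ae_of_all _ fun x => (stdPdf_pos x).le
  · exact stdPdf_integrableOn _
  · have : (Function.support stdPdf) = univ := by
      ext x; simp [Function.support, (stdPdf_pos x).ne']
    rw [this, univ_inter]
    show 0 < volume (Ioi u)
    simp [Real.volume_Ioi]

lemma hasDerivAt_stdPdf (x : ℝ) : HasDerivAt stdPdf (-x * stdPdf x) x := by
  have h1 : HasDerivAt (fun y : ℝ => -y ^ 2 / 2) (-x) x := by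
    have := ((hasDerivAt_pow 2 x).neg.div_const 2)
    exact this.congr_deriv (by norm_num; ring)
  have h2 := (h1.exp).div_const (Real.sqrt (2 * Real.pi))
  exact h2.congr_deriv (by simp [stdPdf]; ring)

lemma tendsto_stdPdf_atTop : Tendsto stdPdf atTop (𝓝 0) := by
  have h0 : Tendsto (fun x : ℝ => x ^ 2 / 2) atTop atTop :=
    (tendsto_pow_atTop two_ne_zero).atTop_div_const (by norm_num)
  have h : Tendsto (fun x : ℝ => -x ^ 2 / 2) atTop atBot := by
    simpa [neg_div] using tendsto_neg_atBot_iff.2 h0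
  have := (Real.tendsto_exp_atBot.comp h).div_const (Real.sqrt (2 * Real.pi))
  simp only [Function.comp_def, zero_div] at this
  exact this

lemma mill_core (u : ℝ) (hu : 2 ≤ u) :
    IntegrableOn (fun x => (1 - 3 / x ^ 4) * stdPdf x) (Ioi u) ∧
    ∫ x in Ioi u, (1 - 3 / x ^ 4) * stdPdf x = stdPdf u / u - stdPdf u / u ^ 3 := by
  have hu0 : (0:ℝ) < u := by linarith
  have hderiv : ∀ x ∈ Ici u, HasDerivAt (fun y => -(stdPdf y / y - stdPdf y / y ^ 3))
      ((1 - 3 / x ^ 4) * stdPdf x) x := by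
    intro x hx
    have hx0 : x ≠ 0 := by have : (2:ℝ) ≤ x := le_trans hu hx; positivity
    have h1 : HasDerivAt (fun y : ℝ => stdPdf y / y)
        ((-x * stdPdf x * x - stdPdf x * 1) / x ^ 2) x :=
      (hasDerivAt_stdPdf x).div (hasDerivAt_id x) hx0
    have h2 : HasDerivAt (fun y : ℝ => stdPdf y / y ^ 3)
        ((-x * stdPdf x * x ^ 3 - stdPdf x * (3 * x ^ 2)) / (x ^ 3) ^ 2) x := by
      have := (hasDerivAt_stdPdf x).div (hasDerivAt_pow 3 x) (pow_ne_zero 3 hx0)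
      exact this.congr_deriv (by push_cast; ring)
    have := (h1.sub h2).neg
    exact this.congr_deriv (by field_simp; ring)
  have hpos : ∀ x ∈ Ioi u, 0 ≤ (1 - 3 / x ^ 4) * stdPdf x := by
    intro x hx
    have hx2 : (2:ℝ) ≤ x := le_trans hu (le_of_lt hx)
    have : 3 / x ^ 4 ≤ 3 / 2 ^ 4 := by
      apply div_le_div_of_nonneg_left (by norm_num) (by norm_num)
      exact pow_le_pow_left₀ (by norm_num) hx2 4
    have h1 : 0 ≤ 1 - 3 / x ^ 4 := by norm_num at this ⊢; linarith
    exact mul_nonneg h1 (stdPdf_pos x).le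
  have htend : Tendsto (fun y => -(stdPdf y / y - stdPdf y / y ^ 3)) atTop (𝓝 0) := by
    have h1 : Tendsto (fun y : ℝ => stdPdf y / y) atTop (𝓝 0) := by
      simpa [div_eq_mul_inv] using tendsto_stdPdf_atTop.mul tendsto_inv_atTop_zero
    have h2 : Tendsto (fun y : ℝ => stdPdf y / y ^ 3) atTop (𝓝 0) := by
      have := tendsto_stdPdf_atTop.mul
        (tendsto_inv_atTop_zero.comp (tendsto_pow_atTop (n := 3) (by norm_num)))
      simpa [Function.comp, div_eq_mul_inv] using this
    simpa using (h1.sub h2).neg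
  constructor
  · exact integrableOn_Ioi_deriv_of_nonneg' hderiv hpos htend
  · have := integral_Ioi_of_hasDerivAt_of_nonneg' hderiv hpos htend
    rw [this]; ring

lemma psi_lower (u : ℝ) (hu : 2 ≤ u) : stdPdf u / u - stdPdf u / u ^ 3 ≤ Psi u := by
  obtain ⟨hint, heq⟩ := mill_core u hu
  rw [psi_eq_integral, ← heq]
  apply setIntegral_mono_on hint (stdPdf_integrableOn _) measurableSet_Ioi
  intro x _
  have hp := stdPdf_pos x
  have h3 : 0 ≤ 3 / x ^ 4 := by positivity
  nlinarith

lemma psi_upper (u : ℝ) (hu : 0 < u) : Psi u ≤ stdPdf u / u := by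
  have hderiv : ∀ x ∈ Ici u, HasDerivAt (fun y => -(stdPdf y / y))
      ((1 + 1 / x ^ 2) * stdPdf x) x := by
    intro x hx
    have hx0 : x ≠ 0 := ne_of_gt (lt_of_lt_of_le hu hx)
    have h1 : HasDerivAt (fun y : ℝ => stdPdf y / y)
        ((-x * stdPdf x * x - stdPdf x * 1) / x ^ 2) x :=
      (hasDerivAt_stdPdf x).div (hasDerivAt_id x) hx0
    exact h1.neg.congr_deriv (by field_simp; ring)
  have hpos : ∀ x ∈ Ioi u, 0 ≤ (1 + 1 / x ^ 2) * stdPdf x := by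
    intro x hx
    have hx0 : 0 < x := lt_trans hu hx
    have hp := (stdPdf_pos x).le
    have : (0:ℝ) ≤ 1 + 1 / x ^ 2 := by positivity
    exact mul_nonneg this hp
  have htend : Tendsto (fun y => -(stdPdf y / y)) atTop (𝓝 0) := by
    have h1 : Tendsto (fun y : ℝ => stdPdf y / y) atTop (𝓝 0) := by
      simpa [div_eq_mul_inv] using tendsto_stdPdf_atTop.mul tendsto_inv_atTop_zero
    simpa using h1.neg
  have heq := integral_Ioi_of_hasDerivAt_of_nonneg' hderiv hpos htend
  have hint := integrableOn_Ioi_deriv_of_nonneg' hderiv hpos htend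
  have hle : Psi u ≤ ∫ x in Ioi u, (1 + 1 / x ^ 2) * stdPdf x := by
    rw [psi_eq_integral]
    apply setIntegral_mono_on (stdPdf_integrableOn _) hint measurableSet_Ioi
    intro x hx
    have hx0 : 0 < x := lt_trans hu hx
    have hp := stdPdf_pos x
    have h3 : 0 ≤ 1 / x ^ 2 := by positivity
    nlinarith
  rw [heq] at hle
  linarith [hle]

lemma mill : Tendsto (fun x => Psi x * x / stdPdf x) atTop (𝓝 1) := by
  have h2 : Tendsto (fun x : ℝ => 1 / x ^ 2) atTop (𝓝 0) := by
    have h1 : Tendsto (fun x : ℝ => x ^ 2) atTop atTop := tendsto_pow_atTop two_ne_zero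
    have := tendsto_inv_atTop_zero.comp h1
    simpa [Function.comp_def, one_div] using this
  have hlow : Tendsto (fun x : ℝ => 1 - 1 / x ^ 2) atTop (𝓝 1) := by
    have := (tendsto_const_nhds (x := (1:ℝ)) (f := atTop (α := ℝ))).sub h2
    simpa using this
  refine tendsto_of_tendsto_of_tendsto_of_le_of_le' hlow tendsto_const_nhds ?_ ?_
  · filter_upwards [eventually_ge_atTop (2:ℝ)] with x hx
    have hx0 : (0:ℝ) < x := by linarith
    have hp := stdPdf_pos x
    have h2 : stdPdf x / x - stdPdf x / x ^ 3 ≤ Psi x := psi_lower x hx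
    rw [le_div_iff₀ hp]
    have hx3 : (0:ℝ) < x ^ 3 := by positivity
    have : (1 - 1 / x ^ 2) * stdPdf x ≤ Psi x * x := by
      have := mul_le_mul_of_nonneg_right h2 hx0.le
      calc (1 - 1 / x ^ 2) * stdPdf x = (stdPdf x / x - stdPdf x / x ^ 3) * x := by
            field_simp
        _ ≤ Psi x * x := this
    linarith
  · filter_upwards [eventually_gt_atTop (0:ℝ)] with x hx
    have hp := stdPdf_pos x
    rw [div_le_one hp]
    have h := psi_upper x hx
    calc Psi x * x ≤ stdPdf x / x * x := by
          exact mul_le_mul_of_nonneg_right h hx.le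
      _ = stdPdf x := by field_simp

lemma stdPdf_ratio (A U : ℝ) :
    stdPdf A / stdPdf U = Real.exp (-(A ^ 2 - U ^ 2) / 2) := by
  have h : Real.exp (-(A ^ 2 - U ^ 2) / 2) * Real.exp (-U ^ 2 / 2) = Real.exp (-A ^ 2 / 2) := by
    rw [← Real.exp_add]; ring_nf
  have hs : Real.sqrt (2 * Real.pi) ≠ 0 := by positivity
  rw [stdPdf, stdPdf, div_div_div_cancel_right₀, eq_comm, eq_div_iff (Real.exp_ne_zero _)]
  · exact h
  · exact hs

lemma keyLemma (α H θ c : ℝ) (hα0 : 0 < α) (hH : 0 < H) (hθ : 0 < θ)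
    (T u a : ℕ → ℝ) (hu : Tendsto u atTop atTop) (ha : Tendsto a atTop atTop)
    (hlim : Tendsto (fun n => T n * muF α H (u n)) atTop (𝓝 θ))
    (hratio : Tendsto (fun n => a n / u n) atTop (𝓝 1))
    (hdiff : Tendsto (fun n => (a n) ^ 2 - (u n) ^ 2) atTop (𝓝 c)) :
    Tendsto (fun n => T n * muF α H (a n)) atTop (𝓝 (θ * Real.exp (-c / 2))) := by
  have hrpow : Tendsto (fun n => (a n / u n) ^ (2 / α)) atTop (𝓝 1) := by
    have hc : ContinuousAt (fun x : ℝ => x ^ (2 / α)) 1 :=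
      Real.continuousAt_rpow_const 1 (2 / α) (Or.inl one_ne_zero)
    have := hc.tendsto.comp hratio
    simpa [Function.comp_def, Real.one_rpow] using this
  have hM : Tendsto (fun n => (Psi (a n) * a n / stdPdf (a n)) /
      (Psi (u n) * u n / stdPdf (u n))) atTop (𝓝 1) := by
    have := (mill.comp ha).div (mill.comp hu) one_ne_zero
    simpa [Function.comp_def, Pi.div_def] using this
  have hinv : Tendsto (fun n => u n / a n) atTop (𝓝 1) := by
    have := hratio.inv₀ one_ne_zero
    simpa [inv_div] using this
  have hexp : Tendsto (fun n => Real.exp (-((a n) ^ 2 - (u n) ^ 2) / 2)) atTop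
      (𝓝 (Real.exp (-c / 2))) := by
    have h1 : Tendsto (fun n => -((a n) ^ 2 - (u n) ^ 2) / 2) atTop (𝓝 (-c / 2)) :=
      hdiff.neg.div_const 2
    exact (Real.continuous_exp.tendsto _).comp h1
  have hF : Tendsto (fun n => (T n * muF α H (u n)) * ((a n / u n) ^ (2 / α)) *
      ((Psi (a n) * a n / stdPdf (a n)) / (Psi (u n) * u n / stdPdf (u n))) *
      (u n / a n) * Real.exp (-((a n) ^ 2 - (u n) ^ 2) / 2)) atTop
      (𝓝 (θ * 1 * 1 * 1 * Real.exp (-c / 2))) :=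
    (((hlim.mul hrpow).mul hM).mul hinv).mul hexp
  rw [show θ * 1 * 1 * 1 * Real.exp (-c / 2) = θ * Real.exp (-c / 2) by ring] at hF
  apply hF.congr'
  filter_upwards [hu.eventually_gt_atTop 0, ha.eventually_gt_atTop 0] with n hun han
  have hPu := psi_pos (u n); have hPa := psi_pos (a n)
  have hpu := stdPdf_pos (u n); have hpa := stdPdf_pos (a n)
  have hrp : (a n / u n) ^ (2 / α) = a n ^ (2 / α) / u n ^ (2 / α) :=
    Real.div_rpow han.le hun.le _
  have hupos : (0:ℝ) < u n ^ (2 / α) := Real.rpow_pos_of_pos hun _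
  have hapos : (0:ℝ) < a n ^ (2 / α) := Real.rpow_pos_of_pos han _
  rw [hrp, ← stdPdf_ratio (a n) (u n)]
  unfold muF
  field_simp

lemma logT_div_sq (α H θ : ℝ) (hα0 : 0 < α) (hH : 0 < H) (hθ : 0 < θ)
    (T u : ℕ → ℝ) (hT : Tendsto T atTop atTop) (hu : Tendsto u atTop atTop)
    (hlim : Tendsto (fun n => T n * muF α H (u n)) atTop (𝓝 θ)) :
    Tendsto (fun n => Real.log (T n) / (u n) ^ 2) atTop (𝓝 (1 / 2)) := by
  have hu2 : Tendsto (fun n => (u n) ^ 2) atTop atTop :=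
    (tendsto_pow_atTop two_ne_zero).comp hu
  have hinv : Tendsto (fun n => ((u n) ^ 2)⁻¹) atTop (𝓝 0) :=
    tendsto_inv_atTop_zero.comp hu2
  have hlog : Tendsto (fun n => Real.log (T n * muF α H (u n))) atTop (𝓝 (Real.log θ)) :=
    ((Real.continuousAt_log hθ.ne').tendsto).comp hlim
  have hMu : Tendsto (fun n => Psi (u n) * u n / stdPdf (u n)) atTop (𝓝 1) := mill.comp hu
  have hlogM : Tendsto (fun n => Real.log (Psi (u n) * u n / stdPdf (u n))) atTop (𝓝 0) := by
    have := ((Real.continuousAt_log one_ne_zero).tendsto).comp hMu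
    simpa [Function.comp_def] using this
  have hloguu : Tendsto (fun x : ℝ => Real.log x / x) atTop (𝓝 0) :=
    Real.isLittleO_log_id_atTop.tendsto_div_nhds_zero
  have huinv : Tendsto (fun n => (u n)⁻¹) atTop (𝓝 0) := tendsto_inv_atTop_zero.comp hu
  have hlogu : Tendsto (fun n => Real.log (u n) / (u n) ^ 2) atTop (𝓝 0) := by
    have h := (hloguu.comp hu).mul huinv
    rw [mul_zero] at h
    apply h.congr
    intro n
    simp only [Function.comp_def]
    ring
  have htarget : Tendsto (fun n =>
      Real.log (T n * muF α H (u n)) * ((u n) ^ 2)⁻¹ - Real.log H * ((u n) ^ 2)⁻¹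
      - (2 / α) * (Real.log (u n) / (u n) ^ 2)
      - Real.log (Psi (u n) * u n / stdPdf (u n)) * ((u n) ^ 2)⁻¹
      + Real.log (u n) / (u n) ^ 2 + 1 / 2
      + Real.log (Real.sqrt (2 * Real.pi)) * ((u n) ^ 2)⁻¹) atTop
      (𝓝 (Real.log θ * 0 - Real.log H * 0 - (2 / α) * 0 - 0 * 0 + 0 + 1 / 2
        + Real.log (Real.sqrt (2 * Real.pi)) * 0)) := by
    exact ((((((hlog.mul hinv).sub (tendsto_const_nhds.mul hinv)).sub
      (tendsto_const_nhds.mul hlogu)).sub (hlogM.mul hinv)).add hlogu).add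
      tendsto_const_nhds).add (tendsto_const_nhds.mul hinv)
  rw [show Real.log θ * 0 - Real.log H * 0 - (2 / α) * 0 - 0 * 0 + 0 + 1 / 2
        + Real.log (Real.sqrt (2 * Real.pi)) * 0 = 1 / 2 by ring] at htarget
  apply htarget.congr'
  filter_upwards [hu.eventually_gt_atTop 1, hT.eventually_gt_atTop 1] with n hu1 hT1
  have hu0 : (0:ℝ) < u n := by linarith
  have hT0 : (0:ℝ) < T n := by linarith
  have hPu := psi_pos (u n)
  have hpu := stdPdf_pos (u n)
  have hM0 : (0:ℝ) < Psi (u n) * u n / stdPdf (u n) := by positivity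
  have hmu0 : (0:ℝ) < muF α H (u n) := by
    unfold muF
    have := Real.rpow_pos_of_pos hu0 (2 / α)
    positivity
  have hsq : (0:ℝ) < Real.sqrt (2 * Real.pi) := by positivity
  -- expand log (T * muF)
  have hPsiEq : Psi (u n) = (Psi (u n) * u n / stdPdf (u n)) * stdPdf (u n) / u n := by
    field_simp
  have hlogPdf : Real.log (stdPdf (u n)) =
      -(u n) ^ 2 / 2 - Real.log (Real.sqrt (2 * Real.pi)) := by
    rw [stdPdf, Real.log_div (Real.exp_ne_zero _) hsq.ne', Real.log_exp]
  have hexp : Real.log (T n * muF α H (u n)) =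
      Real.log (T n) + Real.log H + (2 / α) * Real.log (u n)
      + Real.log (Psi (u n) * u n / stdPdf (u n))
      + (-(u n) ^ 2 / 2 - Real.log (Real.sqrt (2 * Real.pi))) - Real.log (u n) := by
    rw [Real.log_mul hT0.ne' hmu0.ne']
    unfold muF
    rw [Real.log_mul (by positivity) hPu.ne',
        Real.log_mul hH.ne' (Real.rpow_pos_of_pos hu0 _).ne',
        Real.log_rpow hu0]
    nth_rewrite 1 [hPsiEq]
    rw [Real.log_div (by positivity) hu0.ne', Real.log_mul hM0.ne' hpu.ne', hlogPdf]
    ring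
  rw [hexp]
  have hune : ((u n) ^ 2) ≠ 0 := by positivity
  field_simp
  ring

lemma ratio_identity (z σ U S C : ℝ) (hU : U ≠ 0) (hC : C ≠ 0) :
    ((U + σ * S * z) / C) / U = (1 + σ * z * (S / U)) / C := by
  field_simp

lemma diff_identity (z σ U S ρ : ℝ) (hσ : σ = 1 ∨ σ = -1) (hρ : 1 - ρ ≠ 0) :
    (U + σ * S * z) ^ 2 / (1 - ρ) - U ^ 2
      = (U ^ 2 * ρ + 2 * σ * z * (U * S) + S ^ 2 * z ^ 2) / (1 - ρ) := by
  rcases hσ with rfl | rfl <;> · field_simp; ring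

lemma auxA (r z σ : ℝ) (hr : 0 < r) (hσ : σ = 1 ∨ σ = -1)
    (u L : ℕ → ℝ) (hL : Tendsto L atTop atTop) (hu : Tendsto u atTop atTop)
    (hsq : Tendsto (fun n => (u n) ^ 2 / L n) atTop (𝓝 2)) :
    Tendsto (fun n => (u n + σ * Real.sqrt (r / L n) * z) / Real.sqrt (1 - r / L n))
        atTop atTop ∧
    Tendsto (fun n => ((u n + σ * Real.sqrt (r / L n) * z) / Real.sqrt (1 - r / L n)) / u n)
        atTop (𝓝 1) ∧
    Tendsto (fun n => ((u n + σ * Real.sqrt (r / L n) * z) / Real.sqrt (1 - r / L n)) ^ 2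
        - (u n) ^ 2) atTop (𝓝 (2 * r + 2 * σ * z * Real.sqrt (2 * r))) := by
  have hρ0 : Tendsto (fun n => r / L n) atTop (𝓝 0) := tendsto_const_nhds.div_atTop hL
  have hevL : ∀ᶠ n in atTop, 0 < L n := hL.eventually_gt_atTop 0
  have hevρpos : ∀ᶠ n in atTop, 0 < r / L n := by
    filter_upwards [hevL] with n h; positivity
  have hevρlt : ∀ᶠ n in atTop, r / L n < 1 / 2 :=
    hρ0.eventually (eventually_lt_nhds (by norm_num))
  have hs0 : Tendsto (fun n => Real.sqrt (r / L n)) atTop (𝓝 0) := by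
    have := (Real.continuous_sqrt.tendsto 0).comp hρ0
    simpa [Function.comp_def] using this
  have hc1 : Tendsto (fun n => Real.sqrt (1 - r / L n)) atTop (𝓝 1) := by
    have h1 : Tendsto (fun n => 1 - r / L n) atTop (𝓝 1) := by
      simpa using (tendsto_const_nhds (x := (1:ℝ))).sub hρ0
    have := (Real.continuous_sqrt.tendsto 1).comp h1
    simpa [Function.comp_def, Real.sqrt_one] using this
  have huρ : Tendsto (fun n => (u n) ^ 2 * (r / L n)) atTop (𝓝 (2 * r)) := by
    have h := (tendsto_const_nhds (x := r)).mul hsq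
    rw [show r * 2 = 2 * r by ring] at h
    apply h.congr; intro n; ring
  have hus : Tendsto (fun n => u n * Real.sqrt (r / L n)) atTop (𝓝 (Real.sqrt (2 * r))) := by
    have h1 := (Real.continuous_sqrt.tendsto (2 * r)).comp huρ
    apply Tendsto.congr' _ h1
    filter_upwards [hu.eventually_ge_atTop 0] with n hn
    simp only [Function.comp_def]
    rw [Real.sqrt_mul (sq_nonneg _), Real.sqrt_sq hn]
  have hsu : Tendsto (fun n => Real.sqrt (r / L n) / u n) atTop (𝓝 0) := hs0.div_atTop hu
  have hratio : Tendsto (fun n =>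
      ((u n + σ * Real.sqrt (r / L n) * z) / Real.sqrt (1 - r / L n)) / u n)
      atTop (𝓝 1) := by
    have hnum : Tendsto (fun n => 1 + σ * z * (Real.sqrt (r / L n) / u n)) atTop
        (𝓝 (1 + σ * z * 0)) :=
      tendsto_const_nhds.add (tendsto_const_nhds.mul hsu)
    rw [show (1:ℝ) + σ * z * 0 = 1 by ring] at hnum
    have hg := hnum.div hc1 one_ne_zero
    rw [div_one] at hg
    apply Tendsto.congr' _ hg
    filter_upwards [hu.eventually_gt_atTop 0, hevρlt] with n hun hρn
    have hcpos : 0 < Real.sqrt (1 - r / L n) := Real.sqrt_pos.2 (by linarith)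
    exact (ratio_identity z σ (u n) (Real.sqrt (r / L n)) (Real.sqrt (1 - r / L n))
      hun.ne' hcpos.ne').symm
  have ha : Tendsto (fun n =>
      (u n + σ * Real.sqrt (r / L n) * z) / Real.sqrt (1 - r / L n)) atTop atTop := by
    have h := hratio.pos_mul_atTop one_pos hu
    apply Tendsto.congr' _ h
    filter_upwards [hu.eventually_gt_atTop 0] with n hun
    exact div_mul_cancel₀ _ hun.ne'
  refine ⟨ha, hratio, ?_⟩
  have hp3 : Tendsto (fun n => Real.sqrt (r / L n) ^ 2 * z ^ 2) atTop (𝓝 0) := by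
    have h := (hs0.mul hs0).mul (tendsto_const_nhds (x := z ^ 2))
    rw [show (0:ℝ) * 0 * z ^ 2 = 0 by ring] at h
    apply h.congr; intro n; ring
  have hnum2 : Tendsto (fun n => (u n) ^ 2 * (r / L n)
      + 2 * σ * z * (u n * Real.sqrt (r / L n)) + Real.sqrt (r / L n) ^ 2 * z ^ 2) atTop
      (𝓝 (2 * r + 2 * σ * z * Real.sqrt (2 * r) + 0)) :=
    (huρ.add (tendsto_const_nhds.mul hus)).add hp3
  rw [add_zero] at hnum2
  have hden : Tendsto (fun n => 1 - r / L n) atTop (𝓝 1) := by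
    simpa using (tendsto_const_nhds (x := (1:ℝ))).sub hρ0
  have h := hnum2.div hden one_ne_zero
  rw [div_one] at h
  apply Tendsto.congr' _ h
  filter_upwards [hevρpos, hevρlt, hu.eventually_gt_atTop 0] with n h1 h2 hun
  have hd : (0:ℝ) < 1 - r / L n := by linarith
  have hc2 : Real.sqrt (1 - r / L n) ^ 2 = 1 - r / L n := Real.sq_sqrt hd.le
  rw [eq_comm, div_pow, hc2]
  exact diff_identity z σ (u n) (Real.sqrt (r / L n)) (r / L n) hσ hd.ne'

/-- With `ρ(T) = r/log T`, `T(n) → ∞`, `u_n → ∞` and `T(n)μ(u_n) → θ ∈ (0,∞)`,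
for `u_n^{(z)} = (u_n − ρ(T(n))^{1/2}z)/(1 − ρ(T(n)))^{1/2}` and
`v_n^{(z)} = (u_n + ρ(T(n))^{1/2}z)/(1 − ρ(T(n)))^{1/2}`:
`T(n)μ(u_n^{(z)}) → θe^{−r+√(2r)z}` and `T(n)μ(v_n^{(z)}) → θe^{−r−√(2r)z}`. -/
theorem statement15 (α H r θ : ℝ) (hα0 : 0 < α) (hα2 : α ≤ 2) (hH : 0 < H)
    (hr : 0 < r) (hθ : 0 < θ) (T u : ℕ → ℝ)
    (hT : Tendsto T atTop atTop) (hu : Tendsto u atTop atTop)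
    (hlim : Tendsto (fun n => T n * muF α H (u n)) atTop (𝓝 θ)) :
    ∀ z : ℝ,
      Tendsto (fun n => T n * muF α H
            ((u n - Real.sqrt (r / Real.log (T n)) * z) / Real.sqrt (1 - r / Real.log (T n))))
          atTop (𝓝 (θ * Real.exp (-r + Real.sqrt (2 * r) * z))) ∧
        Tendsto (fun n => T n * muF α H
            ((u n + Real.sqrt (r / Real.log (T n)) * z) / Real.sqrt (1 - r / Real.log (T n))))
          atTop (𝓝 (θ * Real.exp (-r - Real.sqrt (2 * r) * z))) := by
  intro z
  have hL : Tendsto (fun n => Real.log (T n)) atTop atTop := Real.tendsto_log_atTop.comp hT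
  have hhalf := logT_div_sq α H θ hα0 hH hθ T u hT hu hlim
  have hsq : Tendsto (fun n => (u n) ^ 2 / Real.log (T n)) atTop (𝓝 2) := by
    have h := hhalf.inv₀ (by norm_num : (1:ℝ) / 2 ≠ 0)
    rw [show ((1:ℝ) / 2)⁻¹ = 2 by norm_num] at h
    apply h.congr
    intro n
    rw [inv_div]
  constructor
  · obtain ⟨ha, hratio, hdiff⟩ := auxA r z (-1) hr (Or.inr rfl) u (fun n => Real.log (T n))
      hL hu hsq
    have hkey := keyLemma α H θ (2 * r + 2 * (-1) * z * Real.sqrt (2 * r)) hα0 hH hθ T u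
      (fun n => (u n + (-1) * Real.sqrt (r / Real.log (T n)) * z) /
        Real.sqrt (1 - r / Real.log (T n))) hu ha hlim hratio hdiff
    rw [show -(2 * r + 2 * (-1) * z * Real.sqrt (2 * r)) / 2
      = -r + Real.sqrt (2 * r) * z by ring] at hkey
    apply hkey.congr
    intro n
    rw [show u n - Real.sqrt (r / Real.log (T n)) * z
      = u n + (-1) * Real.sqrt (r / Real.log (T n)) * z by ring]
  · obtain ⟨ha, hratio, hdiff⟩ := auxA r z 1 hr (Or.inl rfl) u (fun n => Real.log (T n))
      hL hu hsq
    have hkey := keyLemma α H θ (2 * r + 2 * 1 * z * Real.sqrt (2 * r)) hα0 hH hθ T u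
      (fun n => (u n + 1 * Real.sqrt (r / Real.log (T n)) * z) /
        Real.sqrt (1 - r / Real.log (T n))) hu ha hlim hratio hdiff
    rw [show -(2 * r + 2 * 1 * z * Real.sqrt (2 * r)) / 2
      = -r - Real.sqrt (2 * r) * z by ring] at hkey
    apply hkey.congr
    intro n
    rw [show u n + Real.sqrt (r / Real.log (T n)) * z
      = u n + 1 * Real.sqrt (r / Real.log (T n)) * z by ring]
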